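/- For fixed ω ∈ (0,1), the function (θ,τ) ↦ ρ_AMH(θ,τ;ω) = ω/[(e^{θ/2}+e^{-θ/2})(e^{τ/2}+e^{-τ/2}) - ω e^{-θ/2-τ/2}] attains its global maximum at θ = τ = (1/2)log(1-ω), with maximum value (ω/2)·1/(1+√(1-ω)). -/

import Mathlib

noncomputable def rhoAMH (ω θ τ : ℝ) : ℝ :=
  ω / ((Real.exp (θ / 2) + Real.exp (-θ / 2)) * (Real.exp (τ / 2) + Real.exp (-τ / 2))
        - ω * Real.exp (-θ / 2 - τ / 2))

private lemma amgm_aux (x c : ℝ) (hx : 0 < x) (hc : 0 ≤ c) :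
    2 * Real.sqrt c ≤ x + c / x := by
  have h1 : Real.sqrt c * Real.sqrt c = c := Real.mul_self_sqrt hc
  have h2 : c / x * x = c := div_mul_cancel₀ c hx.ne'
  nlinarith [sq_nonneg (x - Real.sqrt c), hx, div_nonneg hc hx.le]

theorem amh_correlation_max (ω : ℝ) (hω : ω ∈ Set.Ioo (0 : ℝ) 1) :
    (∀ θ τ : ℝ, rhoAMH ω θ τ ≤
      rhoAMH ω ((1 / 2) * Real.log (1 - ω)) ((1 / 2) * Real.log (1 - ω))) ∧
    rhoAMH ω ((1 / 2) * Real.log (1 - ω)) ((1 / 2) * Real.log (1 - ω))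
      = (ω / 2) * (1 / (1 + Real.sqrt (1 - ω))) := by
  obtain ⟨hω0, hω1⟩ := hω
  have h1ω : (0:ℝ) < 1 - ω := by linarith
  set v := Real.sqrt (1 - ω) with hv
  have hv0 : 0 < v := Real.sqrt_pos.mpr h1ω
  have hv2 : v * v = 1 - ω := Real.mul_self_sqrt h1ω.le
  -- value at critical point
  set θ0 : ℝ := (1 / 2) * Real.log (1 - ω) with hθ0
  have hu2 : Real.exp (θ0 / 2) * Real.exp (θ0 / 2) = v := by
    rw [← Real.exp_add]
    have : θ0 / 2 + θ0 / 2 = Real.log (1 - ω) / 2 := by rw [hθ0]; ring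
    rw [this, ← Real.log_sqrt h1ω.le, Real.exp_log hv0]
  set u : ℝ := Real.exp (θ0 / 2) with hu
  have hu0 : 0 < u := Real.exp_pos _
  have hneg : Real.exp (-θ0 / 2) = 1 / u := by
    rw [neg_div, Real.exp_neg, one_div, hu]
  have hneg2 : Real.exp (-θ0 / 2 - θ0 / 2) = 1 / (u * u) := by
    rw [Real.exp_sub, hneg, ← hu, div_div]
  have hval : rhoAMH ω θ0 θ0 = ω / (2 + 2 * v) := by
    unfold rhoAMH
    rw [← hu, hneg, hneg2]
    congr 1
    field_simp
    nlinarith [hu2]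
  have hden0 : (0:ℝ) < 2 + 2 * v := by linarith
  constructor
  · intro θ τ
    set s := Real.exp (θ / 2) with hs
    set t := Real.exp (τ / 2) with ht
    have hs0 : 0 < s := Real.exp_pos _
    have ht0 : 0 < t := Real.exp_pos _
    have hsneg : Real.exp (-θ / 2) = 1 / s := by rw [neg_div, Real.exp_neg, one_div, hs]
    have htneg : Real.exp (-τ / 2) = 1 / t := by rw [neg_div, Real.exp_neg, one_div, ht]
    have hstneg : Real.exp (-θ / 2 - τ / 2) = 1 / (s * t) := by
      rw [Real.exp_sub, hsneg, ← ht, div_div]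
    have hD : (s + 1 / s) * (t + 1 / t) - ω * (1 / (s * t))
        = s * t + (1 - ω) / (s * t) + (s / t + t / s) := by
      field_simp; ring
    have ha : 2 * v ≤ s * t + (1 - ω) / (s * t) := amgm_aux _ _ (mul_pos hs0 ht0) h1ω.le
    have hb : 2 ≤ s / t + t / s := by
      have := amgm_aux (s / t) 1 (div_pos hs0 ht0) zero_le_one
      rw [Real.sqrt_one] at this
      have h1 : (1:ℝ) / (s / t) = t / s := one_div_div s t
      linarith [this, h1 ▸ this]
    have hDge : 2 + 2 * v ≤ (s + 1 / s) * (t + 1 / t) - ω * (1 / (s * t)) := by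
      rw [hD]; linarith
    rw [hval]
    unfold rhoAMH
    rw [← hs, ← ht, hsneg, htneg, hstneg]
    gcongr
  · rw [hval]
    have h1v : (1:ℝ) + v ≠ 0 := by positivity
    field_simp
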